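/- arXiv:0704.2381 — 2 statements merged into one kernel-verified Lean document; each statement's English description precedes it below -/
import Mathlib

section
/- If W is a right infinite word on a finite alphabet such that for some n the number of distinct subwords of W of length n is at most n, then W is ultimately periodic. -/
/-- The factor (subword) of the right infinite word `W` starting at position `i`, of length `n`. -/
def FactorAt {X : Type*} (W : ℕ → X) (i n : ℕ) : List X :=
  (List.range n).map fun k => W (i + k)

/-- The finite word `u` occurs in `W` at position `i`. -/
def OccursAt {X : Type*} (W : ℕ → X) (u : List X) (i : ℕ) : Prop :=
  FactorAt W i u.length = u

/-- `u` is a (finite) subword of the right infinite word `W`. -/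
def IsFactor {X : Type*} (W : ℕ → X) (u : List X) : Prop :=
  ∃ i, OccursAt W u i

/-- A right infinite word is prime if every finite subword occurs infinitely often. -/
def IsPrimeWord {X : Type*} (W : ℕ → X) : Prop :=
  ∀ u, IsFactor W u → ∀ N, ∃ i, N ≤ i ∧ OccursAt W u i

/-- `W` is ultimately periodic. -/
def UltPeriodic {X : Type*} (W : ℕ → X) : Prop :=
  ∃ N p, 1 ≤ p ∧ ∀ i, N ≤ i → W (i + p) = W i

/-- `k`-fold concatenation power of a finite word. -/
def wpow {X : Type*} (w : List X) (k : ℕ) : List X := (List.replicate k w).flatten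

/-- The periodic right infinite word `w^ω`. -/
def perWord {X : Type*} [Inhabited X] (w : List X) : ℕ → X :=
  fun n => w.getD (n % w.length) default

/-- The right infinite word `w₁ w₂^ω`. -/
def glueWord {X : Type*} [Inhabited X] (w₁ w₂ : List X) : ℕ → X := fun n =>
  if n < w₁.length then w₁.getD n default
  else w₂.getD ((n - w₁.length) % w₂.length) default

/-- The right infinite word obtained by prefixing `U` with the finite word `w`. -/
def prependWord {X : Type*} (w : List X) (U : ℕ → X) : ℕ → X := fun n =>
  if n < w.length then w.getD n (U 0) else U (n - w.length)

/-- The finite word `w` is a prefix of the right infinite word `U`. -/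
def HasPrefixWord {X : Type*} (U : ℕ → X) (w : List X) : Prop :=
  FactorAt U 0 w.length = w


section Aux

variable {X : Type*}

/-- The set of factors of `W` of length `m`. -/
def FSet (W : ℕ → X) (m : ℕ) : Set (List X) := {u : List X | u.length = m ∧ IsFactor W u}

@[simp] lemma factorAt_length (W : ℕ → X) (i n : ℕ) : (FactorAt W i n).length = n := by
  simp [FactorAt]

lemma mem_FSet_iff (W : ℕ → X) (m : ℕ) (u : List X) :
    u ∈ FSet W m ↔ ∃ i, FactorAt W i m = u := by
  constructor
  · rintro ⟨hl, i, hi⟩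
    exact ⟨i, by rwa [← hl]⟩
  · rintro ⟨i, rfl⟩
    exact ⟨by simp, i, by simp [OccursAt]⟩

lemma factorAt_eq_ofFn (W : ℕ → X) (i m : ℕ) :
    FactorAt W i m = List.ofFn (fun t : Fin m => W (i + t)) := by
  apply List.ext_getElem (by simp)
  intro t h1 h2
  simp [FactorAt]

lemma FSet_finite [Fintype X] (W : ℕ → X) (m : ℕ) : (FSet W m).Finite := by
  apply (Set.finite_range (List.ofFn : (Fin m → X) → List X)).subset
  intro u hu
  obtain ⟨i, rfl⟩ := (mem_FSet_iff W m u).1 hu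
  exact ⟨fun t : Fin m => W (i + t), (factorAt_eq_ofFn W i m).symm⟩

lemma factorAt_take (W : ℕ → X) (i n : ℕ) :
    (FactorAt W i (n + 1)).take n = FactorAt W i n := by
  unfold FactorAt
  rw [← List.map_take, List.take_range]; simp

lemma FSet_take (W : ℕ → X) (m : ℕ) :
    (List.take m) '' FSet W (m + 1) = FSet W m := by
  ext u
  simp only [Set.mem_image, mem_FSet_iff]
  constructor
  · rintro ⟨v, ⟨i, rfl⟩, rfl⟩
    exact ⟨i, (factorAt_take W i m).symm⟩
  · rintro ⟨i, rfl⟩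
    exact ⟨FactorAt W i (m + 1), ⟨i, rfl⟩, factorAt_take W i m⟩

lemma factorAt_eq_iff (W : ℕ → X) (i j m : ℕ) :
    FactorAt W i m = FactorAt W j m ↔ ∀ t, t < m → W (i + t) = W (j + t) := by
  unfold FactorAt
  constructor
  · intro h t ht
    have := congrArg (fun l => l[t]?) h
    simpa [List.getElem?_map, List.getElem?_range, ht] using this
  · intro h
    apply List.ext_getElem (by simp)
    intro t h1 h2
    simpa using h t (by simpa using h1)

end Aux


/-- If a right infinite word over a finite alphabet has at most `n` distinct subwords of
length `n` for some `n`, then it is ultimately periodic. -/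
theorem ultimately_periodic_of_low_complexity {X : Type*} [Fintype X] (W : ℕ → X)
    (n : ℕ)
    (hn : {u : List X | u.length = n ∧ IsFactor W u}.ncard ≤ n) :
    UltPeriodic W := by
  classical
  have hn' : (FSet W n).ncard ≤ n := hn
  -- the complexity is monotone
  have hmono : ∀ m, (FSet W m).ncard ≤ (FSet W (m + 1)).ncard := by
    intro m
    have := Set.ncard_image_le (f := List.take m) (s := FSet W (m + 1)) (FSet_finite W (m + 1))
    rwa [FSet_take] at this
  -- the empty word is the unique factor of length 0
  have h0 : (FSet W 0).ncard = 1 := by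
    have : FSet W 0 = {([] : List X)} := by
      ext u
      simp only [mem_FSet_iff, Set.mem_singleton_iff]
      constructor
      · rintro ⟨i, rfl⟩; simp [FactorAt]
      · rintro rfl; exact ⟨0, by simp [FactorAt]⟩
    rw [this, Set.ncard_singleton]
  -- there is a level at which the complexity stabilizes
  have hex : ∃ m, (FSet W (m + 1)).ncard = (FSet W m).ncard := by
    by_contra h
    push_neg at h
    have hstrict : ∀ m, (FSet W m).ncard < (FSet W (m + 1)).ncard := fun m =>
      lt_of_le_of_ne (hmono m) (fun e => h m e.symm)
    have hgrow : ∀ k, k + 1 ≤ (FSet W k).ncard := by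
      intro k
      induction k with
      | zero => omega
      | succ k ih => have := hstrict k; omega
    have := hgrow n
    omega
  obtain ⟨m, hm⟩ := hex
  -- every factor of length m determines the next letter
  have hinj : Set.InjOn (List.take m) (FSet W (m + 1)) := by
    apply Set.injOn_of_ncard_image_eq _ (FSet_finite W (m + 1))
    rw [FSet_take, hm]
  have hdet : ∀ i j, FactorAt W i m = FactorAt W j m → W (i + m) = W (j + m) := by
    intro i j hij
    have h1 : FactorAt W i (m + 1) ∈ FSet W (m + 1) := (mem_FSet_iff _ _ _).2 ⟨i, rfl⟩
    have h2 : FactorAt W j (m + 1) ∈ FSet W (m + 1) := (mem_FSet_iff _ _ _).2 ⟨j, rfl⟩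
    have heq : FactorAt W i (m + 1) = FactorAt W j (m + 1) :=
      hinj h1 h2 (by rw [factorAt_take, factorAt_take, hij])
    exact (factorAt_eq_iff W i j (m + 1)).1 heq m (by omega)
  -- equality of factors propagates to the right
  have hshift : ∀ k i j, FactorAt W i m = FactorAt W j m →
      FactorAt W (i + k) m = FactorAt W (j + k) m := by
    intro k
    induction k with
    | zero => simp only [Nat.add_zero]; exact fun i j h => h
    | succ k ih =>
      intro i j h
      have hk := ih i j h
      rw [factorAt_eq_iff] at hk ⊢
      intro t ht
      rcases Nat.lt_or_ge (t + 1) m with h' | h'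
      · have := hk (t + 1) h'
        have e1 : i + (k + 1) + t = i + k + (t + 1) := by omega
        have e2 : j + (k + 1) + t = j + k + (t + 1) := by omega
        rw [e1, e2]; exact this
      · have htm : t + 1 = m := by omega
        have := hdet (i + k) (j + k) (by rw [factorAt_eq_iff]; exact hk)
        have e1 : i + (k + 1) + t = i + k + m := by omega
        have e2 : j + (k + 1) + t = j + k + m := by omega
        rw [e1, e2]; exact this
  -- pigeonhole: two positions with the same length-`m` factor
  obtain ⟨a, b, hab, hfab⟩ :=
    Finite.exists_ne_map_eq_of_infinite (fun i : ℕ => (fun t : Fin m => W (i + t)))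
  have hfac : ∀ a b : ℕ, (fun t : Fin m => W (a + t)) = (fun t : Fin m => W (b + t)) →
      FactorAt W a m = FactorAt W b m := by
    intro a b h
    rw [factorAt_eq_iff]
    intro t ht
    exact congrFun h ⟨t, ht⟩
  -- WLOG a < b
  rcases Nat.lt_or_ge a b with hlt | hge
  · refine ⟨a + m, b - a, by omega, ?_⟩
    intro t ht
    set k := t - (a + m) with hk
    have h1 := hdet (a + k) (b + k) (hshift k a b (hfac a b hfab))
    have e1 : t + (b - a) = b + k + m := by omega
    have e2 : t = a + k + m := by omega
    rw [e1, e2]; exact h1.symm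
  · have hlt : b < a := by omega
    refine ⟨b + m, a - b, by omega, ?_⟩
    intro t ht
    set k := t - (b + m) with hk
    have h1 := hdet (b + k) (a + k) (hshift k b a (hfac b a hfab.symm))
    have e1 : t + (a - b) = a + k + m := by omega
    have e2 : t = b + k + m := by omega
    rw [e1, e2]; exact h1.symm
end

section
/- Let A = ⊕_{i≥0} A_i be a finitely generated graded prime K-algebra, let I be an ideal of A containing no nonzero homogeneous element, and suppose x ∈ A is nonzero homogeneous, y ∈ A is a sum of homogeneous elements of degree strictly less than deg(x), x + y ∈ I, and z is an element of the extended centre Z of A with zx = y. Then z is not algebraic over K. -/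
set_option maxHeartbeats 1000000
set_option synthInstance.maxHeartbeats 400000

open Polynomial

section Aux

variable {K : Type*} [Field K] {Q : Type*} [Ring Q] [Algebra K Q]

private lemma aeval_mem_center' (w : Q) (hw : w ∈ Subring.center Q) (r : K[X]) :
    Polynomial.aeval w r ∈ Subring.center Q := by
  induction r using Polynomial.induction_on' with
  | add p q hp hq => rw [map_add]; exact Subring.add_mem _ hp hq
  | monomial n a =>
      rw [Polynomial.aeval_monomial]
      exact Subring.mul_mem _
        (Subring.mem_center_iff.2 fun g => (Algebra.commutes a g).symm)
        (Subring.pow_mem _ hw n)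

private lemma exists_inv_poly (w : Q) (hw : w ∈ Subring.center Q)
    (hcancel : ∀ u ∈ Subring.center Q, w * u = 0 → u = 0) :
    ∀ (q : K[X]), q ≠ 0 → Polynomial.aeval w q = 0 →
      ∃ P : K[X], w * Polynomial.aeval w P = 1 := by
  suffices H : ∀ n (q : K[X]), q.natDegree = n → q ≠ 0 → Polynomial.aeval w q = 0 →
      ∃ P : K[X], w * Polynomial.aeval w P = 1 by
    exact fun q hq h0 => H q.natDegree q rfl hq h0
  intro n
  induction n using Nat.strong_induction_on with
  | _ n ih =>
    intro q hdeg hq h0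
    have key : X * q.divX + C (q.coeff 0) = q := q.X_mul_divX_add
    have heval : w * Polynomial.aeval w q.divX + algebraMap K Q (q.coeff 0) = 0 := by
      have := congrArg (Polynomial.aeval w) key
      rw [map_add, map_mul, Polynomial.aeval_X, Polynomial.aeval_C] at this
      rw [this, h0]
    by_cases hc : q.coeff 0 = 0
    · -- q = X * divX q, cancel and recurse
      have hq' : q.divX ≠ 0 := by
        intro h
        apply hq
        rw [← key, h, mul_zero, zero_add, hc, map_zero]
      have h0' : Polynomial.aeval w q.divX = 0 := by
        apply hcancel _ (aeval_mem_center' w hw _)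
        rw [hc, map_zero, add_zero] at heval
        exact heval
      have hlt : q.divX.natDegree < n := by
        rw [← hdeg]
        have h1 : q.divX.natDegree = q.natDegree - 1 :=
          Polynomial.natDegree_divX_eq_natDegree_tsub_one
        have h2 : q.natDegree ≠ 0 := by
          intro h
          exact hq' (Polynomial.divX_eq_zero_iff.2 (q.eq_C_of_natDegree_eq_zero h))
        omega
      exact ih _ hlt q.divX rfl hq' h0'
    · refine ⟨(-(q.coeff 0)⁻¹) • q.divX, ?_⟩
      rw [map_smul, mul_smul_comm]
      have h1 : w * Polynomial.aeval w q.divX = -(algebraMap K Q (q.coeff 0)) :=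
        eq_neg_of_add_eq_zero_left heval
      rw [h1]
      simp only [neg_smul, smul_neg, neg_neg]
      rw [Algebra.smul_def, ← map_mul, inv_mul_cancel₀ hc, map_one]

end Aux

section Chains

variable {A : Type*} [Ring A]

/-- `Rchain x n a = x * a 0 * x * a 1 * ⋯ * a (n-1) * x` (with `n+1` copies of `x`). -/
private def Rchain (x : A) : ℕ → (ℕ → A) → A
  | 0, _ => x
  | n + 1, a => x * (a 0 * Rchain x n (fun i => a (i + 1)))

/-- `Mchain x y k n a` is `Rchain x n a` with the first `k` copies of `x` replaced by `y`. -/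
private def Mchain (x y : A) : ℕ → ℕ → (ℕ → A) → A
  | 0, n, a => Rchain x n a
  | _ + 1, 0, _ => y
  | k + 1, n + 1, a => y * (a 0 * Mchain x y k n (fun i => a (i + 1)))

end Chains

/-- Lemma on the extended centre: Let `A` be a finitely generated graded prime
`K`-algebra, embedded in a ring `Q` (e.g. its Martindale quotient ring) whose centre is
a field (the extended centre `Z` of `A`).  Let `I` be a two-sided ideal of `A`
containing no nonzero homogeneous element, `x` a nonzero homogeneous element of degree
`m`, `y` a sum of homogeneous elements of degrees `< m`, with `x + y ∈ I`, and suppose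
`z ∈ Z` satisfies `z·x = y`.  Then `z` is not algebraic over `K`. -/
theorem extended_centre_element_not_algebraic
    {K : Type*} [Field K] {A : Type*} [Ring A] [Algebra K A]
    (𝒜 : ℕ → Submodule K A) [GradedAlgebra 𝒜]
    (hfg : Algebra.FiniteType K A)
    (hprime : ∀ a b : A, (∀ r : A, a * r * b = 0) → a = 0 ∨ b = 0)
    {Q : Type*} [Ring Q] [Algebra K Q]
    (f : A →ₐ[K] Q) (hf : Function.Injective f)
    (hZ : IsField (Subring.center Q))
    (I : TwoSidedIdeal A)
    (hI : ∀ a ∈ I, ∀ i : ℕ, a ∈ 𝒜 i → a = 0)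
    (m : ℕ) (x y : A) (hx : x ∈ 𝒜 m) (hx0 : x ≠ 0)
    (hy : ∀ i : ℕ, m ≤ i → ((DirectSum.decompose 𝒜 y) i : A) = 0)
    (hxy : x + y ∈ I)
    (z : Q) (hz : z ∈ Subring.center Q) (hzx : z * f x = f y) :
    ¬ IsAlgebraic K z := by
  classical
  intro halg
  obtain ⟨p, hp0, hpz⟩ := halg
  have hcomm : ∀ u : Q, u * z = z * u := Subring.mem_center_iff.1 hz
  have hslide : ∀ u v : Q, z * (u * v) = u * (z * v) := fun u v => by
    rw [← mul_assoc, ← hcomm u, mul_assoc]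
  -- Step 1 : `1 + z ≠ 0`.
  set w : Q := 1 + z with hw_def
  have hwc : w ∈ Subring.center Q := Subring.add_mem _ (Subring.one_mem _) hz
  have hwne : w ≠ 0 := by
    intro h0
    have hfxy : f (x + y) = 0 := by
      have h1 : f x + z * f x = w * f x := by rw [hw_def, add_mul, one_mul]
      rw [map_add, ← hzx, h1, h0, zero_mul]
    have hxy0 : x + y = 0 := hf (by rw [hfxy, map_zero])
    apply hx0
    have h2 : ((DirectSum.decompose 𝒜 (x + y)) m : A) = x := by
      rw [DirectSum.decompose_add, DirectSum.add_apply, Submodule.coe_add,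
        DirectSum.decompose_of_mem_same 𝒜 hx, hy m le_rfl, add_zero]
    rw [hxy0, DirectSum.decompose_zero] at h2
    simpa using h2.symm
  -- Step 2: cancellation by `w` on central elements.
  have hcancel : ∀ u ∈ Subring.center Q, w * u = 0 → u = 0 := by
    intro u hu h0
    obtain ⟨v, hv⟩ := hZ.mul_inv_cancel (a := ⟨w, hwc⟩)
      (by simpa [Subtype.ext_iff] using hwne)
    have hv' : w * (v : Q) = 1 := by
      have := congrArg Subtype.val hv
      simpa using this
    calc u = ((v : Q) * w) * u := by
            rw [Subring.mem_center_iff.1 hwc (v : Q), hv', one_mul]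
      _ = (v : Q) * (w * u) := by rw [mul_assoc]
      _ = 0 := by rw [h0, mul_zero]
  -- Step 3: a polynomial inverse of `w = 1 + z`, written as a polynomial in `z`.
  have hq0 : p.comp (X - C 1) ≠ 0 := by
    intro h
    apply hp0
    have : (p.comp (X - C 1)).comp (X + C 1) = p := by
      rw [Polynomial.comp_assoc]
      simp
    rw [← this, h, Polynomial.zero_comp]
  have hqe : Polynomial.aeval w (p.comp (X - C 1)) = 0 := by
    rw [Polynomial.aeval_comp]
    simp only [map_sub, Polynomial.aeval_X, Polynomial.aeval_C, map_one]
    rw [hw_def]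
    simpa [add_sub_cancel_left] using hpz
  obtain ⟨P0, hP0⟩ := exists_inv_poly w hwc hcancel (p.comp (X - C 1)) hq0 hqe
  set P : K[X] := P0.comp (X + C 1) with hP_def
  have hπ : w * Polynomial.aeval z P = 1 := by
    rw [hP_def, Polynomial.aeval_comp]
    simp only [map_add, Polynomial.aeval_X, Polynomial.aeval_C, map_one]
    rw [show z + 1 = w by rw [hw_def, add_comm], hP0]
  set d : ℕ := P.natDegree with hd_def
  -- Step 4: the chain identities.
  have L1 : ∀ n k (a : ℕ → A), k ≤ n →
      z * f (Mchain x y k n a) = f (Mchain x y (k + 1) n a) := by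
    intro n
    induction n with
    | zero =>
      intro k a hk
      interval_cases k
      simpa [Mchain, Rchain] using hzx
    | succ n ihn =>
      intro k a hk
      match k with
      | 0 =>
        have e1 : Mchain x y 0 (n+1) a
            = x * (a 0 * Rchain x n (fun i => a (i+1))) := rfl
        have e2 : Mchain x y 1 (n+1) a
            = y * (a 0 * Rchain x n (fun i => a (i+1))) := rfl
        rw [e1, e2, map_mul, map_mul, map_mul, map_mul, ← mul_assoc, hzx]
      | k + 1 =>
        have hk' : k ≤ n := Nat.succ_le_succ_iff.1 hk
        have e1 : Mchain x y (k+1) (n+1) a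
            = y * (a 0 * Mchain x y k n (fun i => a (i+1))) := rfl
        have e2 : Mchain x y (k+2) (n+1) a
            = y * (a 0 * Mchain x y (k+1) n (fun i => a (i+1))) := rfl
        rw [e1, e2, map_mul, map_mul, map_mul, map_mul, hslide, hslide,
          ihn k _ hk']
  have L2 : ∀ k n (a : ℕ → A), k ≤ n →
      z ^ k * f (Rchain x n a) = f (Mchain x y k n a) := by
    intro k
    induction k with
    | zero => intro n a _; simp [Mchain]
    | succ k ihk =>
      intro n a hk
      rw [pow_succ', mul_assoc, ihk n a (Nat.le_of_succ_le hk), L1 n k a (Nat.le_of_succ_le hk)]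
  have L3 : ∀ n k (a : ℕ → A), k ≤ n →
      Mchain x y k n a + Mchain x y (k + 1) n a ∈ I := by
    intro n
    induction n with
    | zero =>
      intro k a hk
      interval_cases k
      simpa [Mchain, Rchain] using hxy
    | succ n ihn =>
      intro k a hk
      match k with
      | 0 =>
        have : Mchain x y 0 (n+1) a + Mchain x y 1 (n+1) a
            = (x + y) * (a 0 * Rchain x n (fun i => a (i+1))) := by
          rw [add_mul]
          rfl
        rw [this]
        exact I.mul_mem_right _ _ hxy
      | k + 1 =>
        have hk' : k ≤ n := Nat.succ_le_succ_iff.1 hk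
        have : Mchain x y (k+1) (n+1) a + Mchain x y (k+2) (n+1) a
            = y * (a 0 * (Mchain x y k n (fun i => a (i+1))
                + Mchain x y (k+1) n (fun i => a (i+1)))) := by
          rw [mul_add, mul_add]
          rfl
        rw [this]
        exact I.mul_mem_left _ _ (I.mul_mem_left _ _ (ihn k _ hk'))
  -- Step 5: every chain of length `d` lies in `I`.
  have key : ∀ a : ℕ → A, Rchain x d a ∈ I := by
    intro a
    set t : A := Rchain x d a with ht
    have hsum : f t = f (∑ k ∈ Finset.range (d + 1),
        P.coeff k • (Mchain x y k d a + Mchain x y (k + 1) d a)) := by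
      rw [map_sum]
      calc f t = (w * Polynomial.aeval z P) * f t := by rw [hπ, one_mul]
        _ = ∑ k ∈ Finset.range (d + 1), P.coeff k • (w * (z ^ k * f t)) := by
            rw [Polynomial.aeval_eq_sum_range, Finset.mul_sum, Finset.sum_mul]
            refine Finset.sum_congr rfl fun k _ => ?_
            rw [mul_smul_comm, smul_mul_assoc, mul_assoc]
        _ = ∑ k ∈ Finset.range (d + 1),
              P.coeff k • f (Mchain x y k d a + Mchain x y (k + 1) d a) := by
            refine Finset.sum_congr rfl fun k hk => ?_
            have hkd : k ≤ d := Nat.lt_succ_iff.1 (Finset.mem_range.1 hk)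
            rw [L2 k d a hkd, map_add, hw_def, add_mul, one_mul, L1 d k a hkd]
        _ = ∑ k ∈ Finset.range (d + 1),
              f (P.coeff k • (Mchain x y k d a + Mchain x y (k + 1) d a)) := by
            simp [map_smul]
    have ht' : t = ∑ k ∈ Finset.range (d + 1),
        P.coeff k • (Mchain x y k d a + Mchain x y (k + 1) d a) := hf hsum
    rw [ht']
    refine sum_mem fun k hk => ?_
    have hkd : k ≤ d := Nat.lt_succ_iff.1 (Finset.mem_range.1 hk)
    rw [Algebra.smul_def]
    exact I.mul_mem_left _ _ (L3 d k a hkd)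
  -- Step 6: chains with homogeneous entries are homogeneous.
  have L4 : ∀ n (a : ℕ → A), (∀ i, ∃ j, a i ∈ 𝒜 j) → ∃ j, Rchain x n a ∈ 𝒜 j := by
    intro n
    induction n with
    | zero => intro a _; exact ⟨m, hx⟩
    | succ n ihn =>
      intro a ha
      obtain ⟨j0, hj0⟩ := ha 0
      obtain ⟨j1, hj1⟩ := ihn (fun i => a (i + 1)) (fun i => ha (i + 1))
      exact ⟨m + (j0 + j1), SetLike.mul_mem_graded hx (SetLike.mul_mem_graded hj0 hj1)⟩
  -- Step 7: homogeneous chains of length `d` vanish; descend using primeness.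
  have HomZero : ∀ n, Prop := fun n =>
    ∀ a : ℕ → A, (∀ i, ∃ j, a i ∈ 𝒜 j) → Rchain x n a = 0
  have hHd : ∀ a : ℕ → A, (∀ i, ∃ j, a i ∈ 𝒜 j) → Rchain x d a = 0 := by
    intro a ha
    obtain ⟨j, hj⟩ := L4 d a ha
    exact hI _ (key a) j hj
  have step : ∀ n, (∀ a : ℕ → A, (∀ i, ∃ j, a i ∈ 𝒜 j) → Rchain x (n + 1) a = 0) →
      (∀ a : ℕ → A, (∀ i, ∃ j, a i ∈ 𝒜 j) → Rchain x n a = 0) := by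
    intro n hsucc a ha
    set b : A := Rchain x n a with hb
    have hhom : ∀ r : A, (∃ j, r ∈ 𝒜 j) → x * (r * b) = 0 := by
      intro r hr
      have := hsucc (fun i => Nat.casesOn i r a)
        (fun i => Nat.casesOn i hr ha)
      rw [show Rchain x (n + 1) (fun i => Nat.casesOn i r a)
          = x * ((fun i : ℕ => Nat.casesOn i r a : ℕ → A) 0
            * Rchain x n (fun i => Nat.casesOn (i + 1) r a)) from rfl] at this
      exact this
    have hall : ∀ r : A, x * r * b = 0 := by
      intro r
      conv_lhs => rw [← DirectSum.sum_support_decompose 𝒜 r]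
      rw [Finset.mul_sum, Finset.sum_mul]
      refine Finset.sum_eq_zero fun i _ => ?_
      rw [mul_assoc]
      exact hhom _ ⟨i, SetLike.coe_mem _⟩
    rcases hprime x b hall with h | h
    · exact absurd h hx0
    · exact h
  have down : ∀ n, (∀ a : ℕ → A, (∀ i, ∃ j, a i ∈ 𝒜 j) → Rchain x n a = 0) →
      (∀ a : ℕ → A, (∀ i, ∃ j, a i ∈ 𝒜 j) → Rchain x 0 a = 0) := by
    intro n
    induction n with
    | zero => exact id
    | succ n ihn => intro h; exact ihn (step n h)
  have : x = 0 := by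
    have := down d hHd (fun _ => 1) (fun _ => ⟨0, SetLike.one_mem_graded 𝒜⟩)
    simpa [Rchain] using this
  exact hx0 this
end
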